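/- arXiv:math/9905017 — 3 statements merged into one kernel-verified Lean document; each statement's English description precedes it below -/
import Mathlib

section
/- Let X be a complex Banach space and λ, β ≥ 1. Suppose X is λ-extendably locally reflexive and X has the β-bounded approximation property. Then for every ε > 0 and all finite-dimensional subspaces F ⊆ X* and G ⊆ X**, there exists a finite-rank bounded linear operator U : X** → X** such that U(X**) ⊆ ι_X(X), ‖U‖ ≤ λβ + ε, and (Ug)(f) = g(f) for all g ∈ G and f ∈ F. -/
open NormedSpace

namespace NormedSpace

/-- The topological dual `E →L[𝕜] 𝕜` of a seminormed space `E`, as `NormedSpace.Dual` was in the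
older Mathlib (a `def` carrying the operator-norm instances). -/
def Dual (𝕜 : Type*) [NontriviallyNormedField 𝕜] (E : Type*) [SeminormedAddCommGroup E]
    [NormedSpace 𝕜 E] : Type _ :=
  E →L[𝕜] 𝕜

noncomputable instance (𝕜 : Type*) [NontriviallyNormedField 𝕜] (E : Type*) [SeminormedAddCommGroup E]
    [NormedSpace 𝕜 E] : SeminormedAddCommGroup (Dual 𝕜 E) :=
  ContinuousLinearMap.toSeminormedAddCommGroup

noncomputable instance (𝕜 : Type*) [NontriviallyNormedField 𝕜] (E : Type*) [SeminormedAddCommGroup E]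
    [NormedSpace 𝕜 E] : NormedSpace 𝕜 (Dual 𝕜 E) :=
  ContinuousLinearMap.toNormedSpace

instance (𝕜 : Type*) [NontriviallyNormedField 𝕜] (E : Type*) [SeminormedAddCommGroup E]
    [NormedSpace 𝕜 E] : FunLike (Dual 𝕜 E) E 𝕜 :=
  ContinuousLinearMap.funLike

end NormedSpace

section DualHelpers

variable {𝕜 : Type*} [NontriviallyNormedField 𝕜] {E : Type*} [SeminormedAddCommGroup E]
  [NormedSpace 𝕜 E]

instance dualCLMClass : ContinuousSemilinearMapClass (Dual 𝕜 E) (RingHom.id 𝕜) E 𝕜 :=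
  ContinuousLinearMap.continuousSemilinearMapClass

instance dualT2 : T2Space (Dual 𝕜 E) := (inferInstance : T2Space (E →L[𝕜] 𝕜))

@[ext] theorem dual_ext' {f g : Dual 𝕜 E} (h : ∀ x, f x = g x) : f = g :=
  ContinuousLinearMap.ext h

theorem dual_sum_apply' {ι : Type*} (s : Finset ι) (f : ι → Dual 𝕜 E) (x : E) :
    (∑ i ∈ s, f i) x = ∑ i ∈ s, f i x := by
  classical
  induction s using Finset.cons_induction with
  | empty => rfl
  | cons a s ha ih => rw [Finset.sum_cons, Finset.sum_cons, ← ih]; rfl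

theorem dual_smul_apply' (c : 𝕜) (f : Dual 𝕜 E) (x : E) : (c • f) x = c • f x := rfl

theorem dual_smulRight_apply' {V : Type*} [NormedAddCommGroup V] [NormedSpace 𝕜 V]
    (f : Dual 𝕜 E) (v : V) (z : E) :
    (ContinuousLinearMap.smulRight f v) z = f z • v := rfl

end DualHelpers

/-- The canonical embedding, typed into `Dual ℂ (Dual ℂ E)`. -/
noncomputable def ιD (E : Type*) [SeminormedAddCommGroup E] [NormedSpace ℂ E] :
    E →L[ℂ] Dual ℂ (Dual ℂ E) :=
  inclusionInDoubleDual ℂ E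

theorem ιD_apply {E : Type*} [SeminormedAddCommGroup E] [NormedSpace ℂ E] (x : E)
    (f : Dual ℂ E) : ιD E x f = f x := rfl

theorem ιD_norm (E : Type*) [SeminormedAddCommGroup E] [NormedSpace ℂ E] : ‖ιD E‖ ≤ 1 :=
  inclusionInDoubleDual_norm_le ℂ E
set_option maxHeartbeats 2000000
set_option synthInstance.maxHeartbeats 400000

/-- Linearly independent continuous functionals admit dual vectors. -/
lemma exists_dual_vectors (X : Type*) [NormedAddCommGroup X] [NormedSpace ℂ X]
    {m : ℕ} (f : Fin m → Dual ℂ X)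
    (hf : LinearIndependent ℂ fun j => ContinuousLinearMap.toLinearMap (f j)) :
    ∃ y : Fin m → X, ∀ j k, f j (y k) = if j = k then 1 else 0 := by
  set Φ : X →ₗ[ℂ] (Fin m → ℂ) := LinearMap.pi (fun j => ContinuousLinearMap.toLinearMap (f j)) with hΦ
  have hsurj : Function.Surjective Φ := by
    rw [← LinearMap.range_eq_top]
    by_contra h
    obtain ⟨ξ, hξ0, hξ⟩ :=
      Submodule.exists_dual_map_eq_bot_of_lt_top (lt_top_iff_ne_top.2 h) inferInstance
    have hkill : ∀ x : X, ξ (Φ x) = 0 := by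
      intro x
      have : ξ (Φ x) ∈ Submodule.map ξ (LinearMap.range Φ) :=
        Submodule.mem_map_of_mem (LinearMap.mem_range_self Φ x)
      rw [hξ] at this
      simpa using this
    have hrep : ∀ v : Fin m → ℂ, ξ v = ∑ k, v k * ξ (Pi.single k 1) := by
      intro v
      have hv : v = ∑ k, v k • (Pi.single k (1:ℂ) : Fin m → ℂ) := by
        funext j
        simp [Pi.single_apply]
      conv_lhs => rw [hv]
      simp [mul_comm]
    have hzero : ∀ k, ξ (Pi.single k 1) = 0 := by
      have hcomb : ∑ k, ξ (Pi.single k 1) • ContinuousLinearMap.toLinearMap (f k) = 0 := by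
        ext x
        have := hkill x
        rw [hrep (Φ x)] at this
        simpa [hΦ, mul_comm] using this
      exact Fintype.linearIndependent_iff.1 hf _ hcomb
    apply hξ0
    refine LinearMap.ext fun v => ?_
    rw [hrep v]
    simp [hzero]
  choose y hy using fun k => hsurj (Pi.single k (1:ℂ))
  refine ⟨y, fun j k => ?_⟩
  have := congrFun (hy k) j
  simp [hΦ, Pi.single_apply] at this
  exact this


/-- `X` is `λ`-extendably locally reflexive. -/
def IsELR (X : Type*) [NormedAddCommGroup X] [NormedSpace ℂ X] (lam : ℝ) : Prop :=
  ∀ (F : Subspace ℂ (Dual ℂ X)) (G : Subspace ℂ (Dual ℂ (Dual ℂ X))),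
    FiniteDimensional ℂ F → FiniteDimensional ℂ G →
    ∀ ε : ℝ, 0 < ε →
      ∃ T : Dual ℂ (Dual ℂ X) →L[ℂ] Dual ℂ (Dual ℂ X),
        (∀ g ∈ G, T g ∈ Set.range (inclusionInDoubleDual ℂ X)) ∧
        (∀ g ∈ G, ∀ f ∈ F, T g f = g f) ∧
        ‖T‖ < lam + ε

/-- `Z` has the `λ`-bounded approximation property. -/
def HasBAP (Z : Type*) [NormedAddCommGroup Z] [NormedSpace ℂ Z] (lam : ℝ) : Prop :=
  ∀ ε : ℝ, 0 < ε → ∀ D : Finset Z,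
    ∃ S : Z →L[ℂ] Z,
      FiniteDimensional ℂ (LinearMap.range (S : Z →ₗ[ℂ] Z)) ∧
      ‖S‖ ≤ lam ∧ ∀ z ∈ D, ‖S z - z‖ ≤ ε

/-- If `X` is `λ`-extendably locally reflexive and has the `β`-bounded approximation
property, then for every `ε > 0` and all finite-dimensional `F ⊆ X*`, `G ⊆ X**` there is a
finite-rank operator `U : X** → X**` into `ι_X(X)` of norm `≤ λβ + ε` with
`(Ug)(f) = g(f)` for all `g ∈ G`, `f ∈ F`. -/
theorem stmt2 (X : Type*) [NormedAddCommGroup X] [NormedSpace ℂ X] [CompleteSpace X]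
    (lam β : ℝ) (hlam : 1 ≤ lam) (hβ : 1 ≤ β)
    (hELR : IsELR X lam) (hBAP : HasBAP X β) :
    ∀ ε : ℝ, 0 < ε →
    ∀ (F : Subspace ℂ (Dual ℂ X)) (G : Subspace ℂ (Dual ℂ (Dual ℂ X))),
      FiniteDimensional ℂ F → FiniteDimensional ℂ G →
      ∃ U : Dual ℂ (Dual ℂ X) →L[ℂ] Dual ℂ (Dual ℂ X),
        FiniteDimensional ℂ (LinearMap.range (U : Dual ℂ (Dual ℂ X) →ₗ[ℂ] Dual ℂ (Dual ℂ X))) ∧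
        (∀ z : Dual ℂ (Dual ℂ X), U z ∈ Set.range (inclusionInDoubleDual ℂ X)) ∧
        ‖U‖ ≤ lam * β + ε ∧
        (∀ g ∈ G, ∀ f ∈ F, U g f = g f) := by
  classical
  intro ε hε F G hF hG
  haveI := hF; haveI := hG
  have hβ0 : (0:ℝ) < β := lt_of_lt_of_le one_pos hβ
  set ε₁ : ℝ := ε / (2 * β) with hε₁def
  have hε₁ : 0 < ε₁ := div_pos hε (by positivity)
  obtain ⟨T, hT1, hT2, hT3⟩ := hELR F G hF hG ε₁ hε₁
  -- basis of G and preimages of T(bG i)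
  set n := Module.finrank ℂ G
  let bG := Module.finBasis ℂ G
  have hx : ∀ i : Fin n, ∃ x : X, ιD X x = T (bG i) :=
    fun i => hT1 (bG i) (bG i).2
  choose x hxeq using hx
  -- basis of F and dual vectors
  set m := Module.finrank ℂ F
  let bF := Module.finBasis ℂ F
  have hli : LinearIndependent ℂ fun j : Fin m => ContinuousLinearMap.toLinearMap (bF j : Dual ℂ X) := by
    have h1 : LinearIndependent ℂ fun j : Fin m => (bF j : Dual ℂ X) :=
      bF.linearIndependent.map' F.subtype (Submodule.ker_subtype F)
    exact h1.map' (ContinuousLinearMap.coeLM ℂ) (LinearMap.ker_eq_bot.2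
      (fun a b hab => ContinuousLinearMap.coe_injective hab))
  obtain ⟨y, hy⟩ := exists_dual_vectors X (fun j => (bF j : Dual ℂ X)) hli
  -- Hahn-Banach extensions of coordinate functionals on G
  have hφ : ∀ i : Fin n, ∃ φ : Dual ℂ (Dual ℂ (Dual ℂ X)),
      (∀ g : G, φ g = bG.coord i g) := by
    intro i
    obtain ⟨φ, hφ1, _⟩ := exists_extension_norm_eq G
      (LinearMap.toContinuousLinearMap (bG.coord i))
    exact ⟨φ, fun g => (hφ1 g).trans (by simp)⟩
  choose φ hφeq using hφ
  -- constants
  set K : ℝ := ∑ k, ‖(bF k : Dual ℂ X)‖ * ‖y k‖ with hKdef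
  have hK0 : 0 ≤ K := Finset.sum_nonneg fun k _ => by positivity
  set M : ℝ := ∑ i, ‖φ i‖ with hMdef
  have hM0 : 0 ≤ M := Finset.sum_nonneg fun i _ => norm_nonneg _
  set ε₂ : ℝ := ε / (2 * (M * K + 1)) with hε₂def
  have hMK0 : (0:ℝ) < M * K + 1 := by positivity
  have hε₂ : 0 < ε₂ := div_pos hε (by positivity)
  -- BAP operator
  obtain ⟨S, hS1, hS2, hS3⟩ := hBAP ε₂ hε₂ (Finset.image x Finset.univ)
  have hSx : ∀ i : Fin n, ‖S (x i) - x i‖ ≤ ε₂ := fun i =>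
    hS3 (x i) (Finset.mem_image_of_mem x (Finset.mem_univ i))
  -- explicit finite-rank bidual replacement for S
  set R := LinearMap.range (S : X →ₗ[ℂ] X) with hRdef
  haveI : FiniteDimensional ℂ R := hS1
  set p := Module.finrank ℂ R
  let bR := Module.finBasis ℂ R
  let S₀ : X →L[ℂ] R := S.codRestrict R (fun z => LinearMap.mem_range_self _ z)
  let ψ : Fin p → Dual ℂ X := fun j =>
    (LinearMap.toContinuousLinearMap (bR.coord j)).comp S₀
  have key : ∀ z : X, S z = ∑ j, ψ j z • (bR j : X) := by
    intro z
    have h := bR.sum_repr (S₀ z)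
    calc S z = ((S₀ z : R) : X) := rfl
      _ = ∑ j, ψ j z • (bR j : X) := by
          rw [← h]; push_cast [Submodule.coe_sum]; rfl
  let A : Dual ℂ (Dual ℂ X) →L[ℂ] X :=
    ∑ j, (ιD (Dual ℂ X) (ψ j)).smulRight (bR j : X)
  have hA_apply : ∀ z, A z = ∑ j, z (ψ j) • (bR j : X) := by
    intro z
    simp [A, ContinuousLinearMap.sum_apply, dual_smulRight_apply', ιD_apply]
  have hA_norm : ∀ z, ‖A z‖ ≤ ‖S‖ * ‖z‖ := by
    intro z
    refine norm_le_dual_bound ℂ _ (by positivity) fun f => ?_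
    have hcomb : (∑ j, f (bR j : X) • ψ j) = f.comp S := by
      ext w
      simp only [ContinuousLinearMap.sum_apply, ContinuousLinearMap.smul_apply,
        ContinuousLinearMap.comp_apply, smul_eq_mul, dual_sum_apply', dual_smul_apply']
      change _ = f (S w)
      rw [key w, map_sum]
      simp [mul_comm]
      rfl
    have : f (A z) = z (f.comp S) := by
      rw [hA_apply, map_sum, ← hcomb, map_sum]
      simp [mul_comm]
      rfl
    rw [this]
    calc ‖z (f.comp S)‖ ≤ ‖z‖ * ‖f.comp S‖ := z.le_opNorm _
      _ ≤ ‖z‖ * (‖f‖ * ‖S‖) := by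
          gcongr; exact (f.opNorm_comp_le S)
      _ = ‖S‖ * ‖z‖ * ‖f‖ := by ring
  -- correction vectors
  let w : Fin n → X := fun i => ∑ k, ((bF k : Dual ℂ X) (x i - S (x i))) • y k
  have hw_norm : ∀ i, ‖w i‖ ≤ K * ε₂ := by
    intro i
    calc ‖w i‖ ≤ ∑ k, ‖((bF k : Dual ℂ X) (x i - S (x i))) • y k‖ := norm_sum_le _ _
      _ ≤ ∑ k, (‖(bF k : Dual ℂ X)‖ * ‖y k‖) * ε₂ := by
          refine Finset.sum_le_sum fun k _ => ?_
          rw [norm_smul]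
          calc ‖(bF k : Dual ℂ X) (x i - S (x i))‖ * ‖y k‖
              ≤ (‖(bF k : Dual ℂ X)‖ * ‖x i - S (x i)‖) * ‖y k‖ := by
                gcongr; exact (bF k : Dual ℂ X).le_opNorm _
            _ ≤ (‖(bF k : Dual ℂ X)‖ * ε₂) * ‖y k‖ := by
                have := hSx i
                rw [← norm_neg] at this
                simp only [neg_sub] at this
                gcongr
            _ = (‖(bF k : Dual ℂ X)‖ * ‖y k‖) * ε₂ := by ring
      _ = K * ε₂ := by rw [hKdef, ← Finset.sum_mul]
  -- the operator
  let B : Dual ℂ (Dual ℂ X) →L[ℂ] X := A.comp T + ∑ i, (φ i).smulRight (w i)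
  let U : Dual ℂ (Dual ℂ X) →L[ℂ] Dual ℂ (Dual ℂ X) := (ιD X).comp B
  have hB_apply : ∀ z, B z = A (T z) + ∑ i, φ i z • w i := by
    intro z
    simp [B, ContinuousLinearMap.sum_apply, dual_smulRight_apply']
  refine ⟨U, ?_, ?_, ?_, ?_⟩
  · -- finite rank
    have hBr : LinearMap.range (B : Dual ℂ (Dual ℂ X) →ₗ[ℂ] X) ≤
        Submodule.span ℂ ((Set.range fun j => (bR j : X)) ∪ Set.range w) := by
      rintro v ⟨z, rfl⟩
      rw [show (B : Dual ℂ (Dual ℂ X) →ₗ[ℂ] X) z = B z from rfl, hB_apply z, hA_apply]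
      refine Submodule.add_mem _ ?_ ?_
      · exact Submodule.sum_mem _ fun j _ => Submodule.smul_mem _ _
          (Submodule.subset_span (Or.inl ⟨j, rfl⟩))
      · exact Submodule.sum_mem _ fun i _ => Submodule.smul_mem _ _
          (Submodule.subset_span (Or.inr ⟨i, rfl⟩))
    haveI : FiniteDimensional ℂ
        (Submodule.span ℂ ((Set.range fun j => (bR j : X)) ∪ Set.range w)) :=
      FiniteDimensional.span_of_finite ℂ ((Set.finite_range _).union (Set.finite_range _))
    haveI : FiniteDimensional ℂ (LinearMap.range (B : Dual ℂ (Dual ℂ X) →ₗ[ℂ] X)) :=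
      Submodule.finiteDimensional_of_le hBr
    have hcomp : (U : Dual ℂ (Dual ℂ X) →ₗ[ℂ] Dual ℂ (Dual ℂ X)) =
        ((ιD X : X →L[ℂ] Dual ℂ (Dual ℂ X)) :
          X →ₗ[ℂ] Dual ℂ (Dual ℂ X)).comp (B : Dual ℂ (Dual ℂ X) →ₗ[ℂ] X) := rfl
    rw [hcomp, LinearMap.range_comp]
    infer_instance
  · exact fun z => ⟨B z, rfl⟩
  · -- norm bound
    have hA_op : ‖A‖ ≤ ‖S‖ := ContinuousLinearMap.opNorm_le_bound _ (norm_nonneg S) hA_norm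
    have hT4 : ‖T‖ ≤ lam + ε₁ := le_of_lt hT3
    have h1 : ‖A.comp T‖ ≤ lam * β + ε / 2 := by
      calc ‖A.comp T‖ ≤ ‖A‖ * ‖T‖ := ContinuousLinearMap.opNorm_comp_le _ _
        _ ≤ β * (lam + ε₁) := by
            apply mul_le_mul (le_trans hA_op hS2) hT4 (norm_nonneg T) (le_of_lt hβ0)
        _ = lam * β + β * ε₁ := by ring
        _ = lam * β + ε / 2 := by
            rw [hε₁def]; field_simp
    have h2 : ‖∑ i, (φ i).smulRight (w i)‖ ≤ ε / 2 := by
      calc ‖∑ i, (φ i).smulRight (w i)‖ ≤ ∑ i, ‖(φ i).smulRight (w i)‖ := norm_sum_le _ _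
        _ = ∑ i, ‖φ i‖ * ‖w i‖ := by
            exact Finset.sum_congr rfl fun i _ => ContinuousLinearMap.norm_smulRight_apply _ _
        _ ≤ ∑ i, ‖φ i‖ * (K * ε₂) := by
            refine Finset.sum_le_sum fun i _ => ?_
            exact mul_le_mul_of_nonneg_left (hw_norm i) (norm_nonneg _)
        _ = M * K * ε₂ := by rw [hMdef, ← Finset.sum_mul]; ring
        _ ≤ (M * K + 1) * ε₂ := by
            apply mul_le_mul_of_nonneg_right (by linarith) (le_of_lt hε₂)
        _ = ε / 2 := by rw [hε₂def]; field_simp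
    calc ‖U‖ ≤ ‖ιD X‖ * ‖B‖ := ContinuousLinearMap.opNorm_comp_le _ _
      _ ≤ 1 * ‖B‖ :=
          mul_le_mul_of_nonneg_right (ιD_norm X) (norm_nonneg B)
      _ = ‖B‖ := one_mul _
      _ ≤ ‖A.comp T‖ + ‖∑ i, (φ i).smulRight (w i)‖ := norm_add_le _ _
      _ ≤ (lam * β + ε / 2) + ε / 2 := add_le_add h1 h2
      _ = lam * β + ε := by ring
  · -- interpolation identity
    have hfy : ∀ (f' : F) (k : Fin m), (f' : Dual ℂ X) (y k) = bF.repr f' k := by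
      intro f' k
      have hrep : (f' : Dual ℂ X) = ∑ j, bF.repr f' j • ((bF j : Dual ℂ X)) := by
        conv_lhs => rw [← bF.sum_repr f']
        push_cast [Submodule.coe_sum]
        rfl
      rw [hrep]
      simp only [ContinuousLinearMap.sum_apply, ContinuousLinearMap.smul_apply, smul_eq_mul,
        dual_sum_apply', dual_smul_apply']
      rw [Finset.sum_congr rfl fun j _ => by rw [hy j k]]
      simp [Finset.sum_ite_eq']
    have hfw : ∀ (f' : F) (i : Fin n),
        (f' : Dual ℂ X) (w i) = (f' : Dual ℂ X) (x i - S (x i)) := by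
      intro f' i
      have hrep : (f' : Dual ℂ X) = ∑ j, bF.repr f' j • ((bF j : Dual ℂ X)) := by
        conv_lhs => rw [← bF.sum_repr f']
        push_cast [Submodule.coe_sum]
        rfl
      have lhs : (f' : Dual ℂ X) (w i)
          = ∑ k, ((bF k : Dual ℂ X) (x i - S (x i))) * bF.repr f' k := by
        simp only [w, map_sum, map_smul, smul_eq_mul]
        exact Finset.sum_congr rfl fun k _ => by rw [hfy f' k]
      rw [lhs]
      conv_rhs => rw [hrep]
      simp only [ContinuousLinearMap.sum_apply, ContinuousLinearMap.smul_apply, smul_eq_mul,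
        dual_sum_apply', dual_smul_apply']
      exact Finset.sum_congr rfl fun k _ => mul_comm _ _
    have hBbase : ∀ i : Fin n, B ((bG i : Dual ℂ (Dual ℂ X))) = S (x i) + w i := by
      intro i
      rw [hB_apply]
      congr 1
      · rw [← hxeq i, hA_apply]
        rw [key (x i)]
        exact Finset.sum_congr rfl fun j _ => by rw [ιD_apply]
      · have hco : ∀ i' : Fin n, φ i' ((bG i : Dual ℂ (Dual ℂ X)))
            = if i' = i then 1 else 0 := by
          intro i'
          rw [hφeq i' (bG i)]
          simp [Module.Basis.coord_apply, Module.Basis.repr_self, Finsupp.single_apply, eq_comm]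
        rw [Finset.sum_congr rfl fun i' _ => by rw [hco i']]
        simp [Finset.sum_ite_eq']
    have hbase : ∀ (i : Fin n) (f' : F),
        U ((bG i : Dual ℂ (Dual ℂ X))) (f' : Dual ℂ X)
          = (bG i : Dual ℂ (Dual ℂ X)) (f' : Dual ℂ X) := by
      intro i f'
      have : U ((bG i : Dual ℂ (Dual ℂ X))) = ιD X (S (x i) + w i) := by
        show ιD X (B _) = _
        rw [hBbase i]
      rw [this, ιD_apply, map_add, hfw f' i, ← hT2 (bG i) (bG i).2 (f' : Dual ℂ X) f'.2,
        ← hxeq i, ιD_apply]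
      rw [map_sub]
      ring
    intro g hg f hf
    lift f to F using hf with f'
    set gg : G := ⟨g, hg⟩ with hggdef
    have hgrep : g = ∑ i, bG.repr gg i • ((bG i : Dual ℂ (Dual ℂ X))) := by
      conv_lhs => rw [show g = ↑gg from rfl, ← bG.sum_repr gg]
      push_cast [Submodule.coe_sum]
      rfl
    rw [hgrep, map_sum]
    simp only [map_smul, ContinuousLinearMap.sum_apply, ContinuousLinearMap.smul_apply,
    dual_sum_apply', dual_smul_apply']
    exact Finset.sum_congr rfl fun i _ => by rw [hbase i f']
end

section
/- Let μ ∈ B(ℓ²)* be a bounded linear functional that annihilates every compact operator on ℓ², and let M_1, …, M_n be subsets of the positive integers that are pairwise almost disjoint, i.e. M_i ∩ M_j is finite whenever i ≠ j. Then Σ_{i=1}^n sup{ |μ(P_{M_i} T P_{M_i})| : T ∈ B(ℓ²), ‖T‖ ≤ 1 } ≤ ‖μ‖. -/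
open scoped ENNReal

noncomputable section

/-- The complex Hilbert space `ℓ²` of square-summable sequences indexed by the
positive integers. -/
abbrev H2 : Type := lp (fun _ : ℕ+ => ℂ) 2

/-- The standard orthonormal basis vectors of `ℓ²`. -/
def e (i : ℕ+) : H2 := lp.single 2 i 1

/-- The closed linear span of `{e_i : i ∈ M}` in `ℓ²`. -/
def spanM (M : Set ℕ+) : Submodule ℂ H2 :=
  (Submodule.span ℂ (e '' M)).topologicalClosure

/-- The orthogonal projection `P_M` of `ℓ²` onto the closed linear span of
`{e_i : i ∈ M}`, as a bounded operator on `ℓ²`. -/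
def projM (M : Set ℕ+) : H2 →L[ℂ] H2 :=
  haveI : CompleteSpace (spanM M) :=
    (Submodule.isClosed_topologicalClosure _).completeSpace_coe
  (spanM M).subtypeL.comp ((spanM M).orthogonalProjectionOnto)

/-! ### The masking operator -/

lemma memℓp_indicator (M : Set ℕ+) (x : H2) : Memℓp (M.indicator ⇑x) 2 := by
  refine memℓp_gen ?_
  have hx : Summable fun i => ‖x i‖ ^ (2 : ℝ≥0∞).toReal := (lp.memℓp x).summable (by norm_num)
  refine hx.of_nonneg_of_le (fun i => by positivity) (fun i => ?_)
  gcongr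
  by_cases h : i ∈ M <;> simp [Set.indicator, h]

/-- Pointwise masking (multiplication by the indicator of `M`) as a linear map. -/
def maskLin (M : Set ℕ+) : H2 →ₗ[ℂ] H2 where
  toFun x := ⟨M.indicator ⇑x, memℓp_indicator M x⟩
  map_add' x y := by
    ext i
    show M.indicator ⇑(x + y) i = M.indicator ⇑x i + M.indicator ⇑y i
    by_cases h : i ∈ M <;> simp [Set.indicator, h]
  map_smul' c x := by
    ext i
    by_cases h : i ∈ M <;> simp [Set.indicator, h]

lemma maskLin_norm_le (M : Set ℕ+) (x : H2) : ‖maskLin M x‖ ≤ ‖x‖ := by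
  have h2 : (0:ℝ) < (2 : ℝ≥0∞).toReal := by norm_num
  rw [← Real.rpow_le_rpow_iff (norm_nonneg _) (norm_nonneg _) h2,
    lp.norm_rpow_eq_tsum h2, lp.norm_rpow_eq_tsum h2]
  refine Summable.tsum_le_tsum (fun i => ?_) ?_ ((lp.memℓp x).summable h2)
  · gcongr
    by_cases h : i ∈ M <;> simp [maskLin, Set.indicator, h]
  · exact (lp.memℓp (maskLin M x)).summable h2

/-- Pointwise masking as a continuous linear map. -/
def maskL (M : Set ℕ+) : H2 →L[ℂ] H2 :=
  LinearMap.mkContinuous (maskLin M) 1 (fun x => by simpa using maskLin_norm_le M x)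

@[simp] lemma maskL_apply (M : Set ℕ+) (x : H2) (i : ℕ+) :
    (maskL M x : ∀ _ : ℕ+, ℂ) i = M.indicator ⇑x i := rfl

lemma maskL_norm_apply_le (M : Set ℕ+) (x : H2) : ‖maskL M x‖ ≤ ‖x‖ := maskLin_norm_le M x

lemma maskL_norm_le (M : Set ℕ+) : ‖maskL M‖ ≤ 1 :=
  LinearMap.mkContinuous_norm_le _ zero_le_one _

/-! ### `projM = maskL` -/

lemma mem_orth_of_vanish (M : Set ℕ+) (x : H2)
    (h : ∀ i ∈ M, (x : ∀ _ : ℕ+, ℂ) i = 0) : x ∈ (spanM M)ᗮ := by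
  rw [Submodule.mem_orthogonal']
  intro u hu
  have hle : Submodule.span ℂ (e '' M) ≤ LinearMap.ker ((innerSL ℂ (E := H2) x : H2 →L[ℂ] ℂ) : H2 →ₗ[ℂ] ℂ) := by
    rw [Submodule.span_le]
    rintro _ ⟨i, hi, rfl⟩
    simp only [SetLike.mem_coe, LinearMap.mem_ker, ContinuousLinearMap.coe_coe]
    show (inner ℂ x (e i) : ℂ) = 0
    rw [e, lp.inner_single_right]
    simp [h i hi]
  have hker : spanM M ≤ LinearMap.ker ((innerSL ℂ (E := H2) x : H2 →L[ℂ] ℂ) : H2 →ₗ[ℂ] ℂ) :=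
    (Submodule.span ℂ (e '' M)).topologicalClosure_minimal hle
      (ContinuousLinearMap.isClosed_ker _)
  exact hker hu

lemma mem_spanM_of_support (M : Set ℕ+) (x : H2)
    (h : ∀ i, i ∉ M → (x : ∀ _ : ℕ+, ℂ) i = 0) : x ∈ spanM M := by
  have hs : HasSum (fun i : ℕ+ => lp.single 2 i ((x : ∀ _ : ℕ+, ℂ) i)) x :=
    lp.hasSum_single (by norm_num) x
  have hmem : ∀ s : Finset ℕ+,
      (∑ i ∈ s, lp.single 2 i ((x : ∀ _ : ℕ+, ℂ) i)) ∈ spanM M := by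
    intro s
    refine Submodule.sum_mem _ (fun i _ => ?_)
    by_cases hi : i ∈ M
    · have : lp.single 2 i ((x : ∀ _ : ℕ+, ℂ) i) = (x : ∀ _ : ℕ+, ℂ) i • e i := by
        rw [e, ← lp.single_smul]; norm_num
      rw [this]
      exact Submodule.smul_mem _ _ (Submodule.le_topologicalClosure _
        (Submodule.subset_span ⟨i, hi, rfl⟩))
    · rw [h i hi]
      have : lp.single (E := fun _ : ℕ+ => ℂ) 2 i (0:ℂ) = 0 := by
        ext j; simp [lp.single_apply]
      rw [this]
      exact Submodule.zero_mem _
  exact (Submodule.isClosed_topologicalClosure _).mem_of_tendsto hs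
    (Filter.Eventually.of_forall (fun s => hmem _))

lemma projM_eq (M : Set ℕ+) : projM M = maskL M := by
  haveI : CompleteSpace (spanM M) :=
    (Submodule.isClosed_topologicalClosure _).completeSpace_coe
  refine ContinuousLinearMap.ext fun x => ?_
  show (((spanM M).orthogonalProjectionOnto x : H2)) = maskL M x
  rw [← Submodule.starProjection_apply]
  refine Submodule.eq_starProjection_of_mem_orthogonal ?_ ?_
  · exact mem_spanM_of_support M _ (fun i hi => by
      simp [Set.indicator_of_notMem hi])
  · refine mem_orth_of_vanish M _ (fun i hi => ?_)
    simp [lp.coeFn_sub, Set.indicator_of_mem hi]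

/-! ### Compactness of finite masks -/

lemma isCompactOperator_of_range_fd (f : H2 →L[ℂ] H2) (V : Submodule ℂ H2)
    [FiniteDimensional ℂ V] (h : ∀ x, f x ∈ V) : IsCompactOperator ⇑f := by
  refine ⟨Subtype.val '' Metric.closedBall (0 : V) ‖f‖,
    (ProperSpace.isCompact_closedBall _ _).image continuous_subtype_val, ?_⟩
  refine Filter.mem_of_superset (Metric.closedBall_mem_nhds (0 : H2) one_pos) ?_
  intro x hx
  refine ⟨⟨f x, h x⟩, ?_, rfl⟩
  simp only [Metric.mem_closedBall, dist_zero_right] at hx ⊢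
  calc ‖(⟨f x, h x⟩ : V)‖ = ‖f x‖ := rfl
    _ ≤ ‖f‖ * ‖x‖ := f.le_opNorm x
    _ ≤ ‖f‖ * 1 := by gcongr
    _ = ‖f‖ := mul_one _

lemma maskL_compact {M : Set ℕ+} (hM : M.Finite) : IsCompactOperator ⇑(maskL M) := by
  haveI : FiniteDimensional ℂ (Submodule.span ℂ (e '' M)) :=
    FiniteDimensional.span_of_finite ℂ (hM.image e)
  refine isCompactOperator_of_range_fd _ (Submodule.span ℂ (e '' M)) (fun x => ?_)
  have hmem : maskL M x ∈ spanM M :=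
    mem_spanM_of_support M _ (fun i hi => by simp [Set.indicator_of_notMem hi])
  rwa [spanM, IsClosed.submodule_topologicalClosure_eq
    (Submodule.closed_of_finiteDimensional _)] at hmem

/-! ### Mask algebra -/

lemma maskL_diff {M N : Set ℕ+} (h : N ⊆ M) : maskL M - maskL N = maskL (M \ N) := by
  refine ContinuousLinearMap.ext fun x => lp.ext (funext fun k => ?_)
  by_cases hN : k ∈ N
  · simp [lp.coeFn_sub, Set.indicator_of_mem (h hN), Set.indicator_of_mem hN,
      Set.indicator_of_notMem (fun hk : k ∈ M \ N => hk.2 hN)]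
  · by_cases hM : k ∈ M
    · simp [lp.coeFn_sub, Set.indicator_of_mem hM, Set.indicator_of_notMem hN,
        Set.indicator_of_mem (Set.mem_diff_of_mem hM hN)]
    · simp [lp.coeFn_sub, Set.indicator_of_notMem hM, Set.indicator_of_notMem hN,
        Set.indicator_of_notMem (fun hk : k ∈ M \ N => hM hk.1)]

/-! ### Inner product helpers -/

lemma inner_eq_zero_of_disjoint_support (f g : H2)
    (h : ∀ k, (f : ∀ _ : ℕ+, ℂ) k = 0 ∨ (g : ∀ _ : ℕ+, ℂ) k = 0) :
    (inner ℂ f g : ℂ) = 0 := by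
  rw [lp.inner_eq_tsum]
  have : ∀ k : ℕ+, (inner ℂ ((f : ∀ _ : ℕ+, ℂ) k) ((g : ∀ _ : ℕ+, ℂ) k) : ℂ) = 0 := by
    intro k
    rcases h k with h | h <;> simp [h]
  simp only [RCLike.inner_apply] at this
  simp [this]

lemma norm_sum_sq_of_orthogonal {ι : Type*} (s : Finset ι) (v : ι → H2)
    (h : ∀ i ∈ s, ∀ j ∈ s, i ≠ j → (inner ℂ (v i) (v j) : ℂ) = 0) :
    ‖∑ i ∈ s, v i‖ ^ 2 = ∑ i ∈ s, ‖v i‖ ^ 2 := by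
  have key : (inner ℂ (∑ i ∈ s, v i) (∑ j ∈ s, v j) : ℂ) = ∑ i ∈ s, inner ℂ (v i) (v i) := by
    rw [sum_inner]
    refine Finset.sum_congr rfl fun i hi => ?_
    rw [inner_sum]
    exact Finset.sum_eq_single_of_mem i hi
      (fun j hj hne => h i hi j hj (fun e => hne e.symm))
  have key2 : ((‖∑ i ∈ s, v i‖ ^ 2 : ℝ) : ℂ) = ((∑ i ∈ s, ‖v i‖ ^ 2 : ℝ) : ℂ) := by
    push_cast
    simp only [inner_self_eq_norm_sq_to_K] at key; exact key
  exact_mod_cast key2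

set_option maxHeartbeats 1000000 in
/-- If `μ ∈ B(ℓ²)*` annihilates the compact operators and `M_1, …, M_n` are pairwise
almost disjoint subsets of the positive integers, then
`Σ_i sup{ |μ(P_{M_i} T P_{M_i})| : ‖T‖ ≤ 1 } ≤ ‖μ‖`. -/
theorem stmt11 (μ : StrongDual ℂ (H2 →L[ℂ] H2))
    (hann : ∀ S : H2 →L[ℂ] H2, IsCompactOperator ⇑S → μ S = 0)
    (n : ℕ) (M : Fin n → Set ℕ+)
    (hdisj : ∀ i j : Fin n, i ≠ j → (M i ∩ M j).Finite) :
    ∑ i : Fin n, (⨆ T ∈ Metric.closedBall (0 : H2 →L[ℂ] H2) 1,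
        ‖μ ((projM (M i)).comp (T.comp (projM (M i))))‖) ≤ ‖μ‖ := by
  classical
  set M' : Fin n → Set ℕ+ := fun i => M i \ ⋃ j, ⋃ (_ : j ≠ i), M j with hM'
  have hsub : ∀ i, M' i ⊆ M i := fun i => Set.diff_subset
  have hfin : ∀ i, (M i \ M' i).Finite := by
    intro i
    have hss : M i \ M' i ⊆ ⋃ j, ⋃ (_ : j ≠ i), (M i ∩ M j) := by
      intro k hk
      rcases hk with ⟨hk1, hk2⟩
      simp only [hM', Set.mem_diff, not_and, not_not, Set.mem_iUnion] at hk2 ⊢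
      rcases hk2 hk1 with ⟨j, hji, hkj⟩
      exact ⟨j, hji, hk1, hkj⟩
    exact Set.Finite.subset
      (Set.finite_iUnion (fun j => Set.finite_iUnion
        (fun hji => hdisj i j (Ne.symm hji)))) hss
  have hdisjoint : ∀ i j : Fin n, i ≠ j → ∀ k, k ∈ M' i → k ∉ M' j := by
    intro i j hij k hki hkj
    exact hki.2 (Set.mem_iUnion.2 ⟨j, Set.mem_iUnion.2 ⟨hij.symm, hkj.1⟩⟩)
  set Q : Fin n → H2 →L[ℂ] H2 := fun i => maskL (M' i) with hQ
  have hQsupp : ∀ (i : Fin n) (y : H2) (k : ℕ+), k ∉ M' i → (Q i y : ∀ _ : ℕ+, ℂ) k = 0 :=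
    fun i y k hk => by simp [hQ, Set.indicator_of_notMem hk]
  have key1 : ∀ (i : Fin n) (T : H2 →L[ℂ] H2),
      μ ((projM (M i)).comp (T.comp (projM (M i)))) = μ ((Q i).comp (T.comp (Q i))) := by
    intro i T
    rw [projM_eq]
    set D := maskL (M i \ M' i) with hDdef
    have hcD : IsCompactOperator ⇑D := maskL_compact (hfin i)
    have hD : maskL (M i) = Q i + D := by
      rw [hQ, hDdef]
      have := maskL_diff (hsub i)
      rw [← this]
      abel
    have expand : (maskL (M i)).comp (T.comp (maskL (M i))) =
        (D.comp (T.comp (maskL (M i)))) + (((Q i).comp T).comp D)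
          + (Q i).comp (T.comp (Q i)) := by
      rw [hD]
      ext x
      simp only [ContinuousLinearMap.add_comp, ContinuousLinearMap.comp_add,
        ContinuousLinearMap.add_apply, ContinuousLinearMap.comp_apply, map_add]
      abel
    have hc1 : μ (D.comp (T.comp (maskL (M i)))) = 0 := by
      refine hann _ ?_
      rw [ContinuousLinearMap.coe_comp']
      exact hcD.comp_clm _
    have hc2 : μ (((Q i).comp T).comp D) = 0 := by
      refine hann _ ?_
      rw [ContinuousLinearMap.coe_comp']
      exact hcD.clm_comp _
    rw [expand, map_add, map_add, hc1, hc2, zero_add, zero_add]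
  have hrw : (∑ i : Fin n, (⨆ T ∈ Metric.closedBall (0 : H2 →L[ℂ] H2) 1,
        ‖μ ((projM (M i)).comp (T.comp (projM (M i))))‖)) =
      ∑ i : Fin n, (⨆ T ∈ Metric.closedBall (0 : H2 →L[ℂ] H2) 1,
        ‖μ ((Q i).comp (T.comp (Q i)))‖) :=
    Finset.sum_congr rfl fun i _ =>
      iSup_congr fun T => iSup_congr fun _ => by rw [key1]
  rw [hrw]
  have hQnorm : ∀ i : Fin n, ‖Q i‖ ≤ 1 := fun i => maskL_norm_le _
  have hquad : ∀ (i : Fin n) (T : H2 →L[ℂ] H2), ‖T‖ ≤ 1 →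
      ‖μ ((Q i).comp (T.comp (Q i)))‖ ≤ ‖μ‖ := by
    intro i T hT
    have h1 : ‖(Q i).comp (T.comp (Q i))‖ ≤ ‖Q i‖ * ‖T.comp (Q i)‖ :=
      ContinuousLinearMap.opNorm_comp_le _ _
    have h2 : ‖T.comp (Q i)‖ ≤ ‖T‖ * ‖Q i‖ := ContinuousLinearMap.opNorm_comp_le _ _
    have h3 : ‖(Q i).comp (T.comp (Q i))‖ ≤ 1 := by
      have hq := hQnorm i
      have hTQ : ‖T.comp (Q i)‖ ≤ 1 := by nlinarith [norm_nonneg (T.comp (Q i)), norm_nonneg (Q i), norm_nonneg T]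
      nlinarith [norm_nonneg (T.comp (Q i)), norm_nonneg (Q i)]
    calc ‖μ ((Q i).comp (T.comp (Q i)))‖ ≤ ‖μ‖ * ‖(Q i).comp (T.comp (Q i))‖ := μ.le_opNorm _
      _ ≤ ‖μ‖ * 1 := by gcongr
      _ = ‖μ‖ := mul_one _
  refine le_of_forall_pos_le_add fun ε hε => ?_
  set ε' : ℝ := ε / (n + 1) with hε'def
  have hε' : 0 < ε' := by positivity
  have hchoice : ∀ i : Fin n, ∃ T : H2 →L[ℂ] H2, ‖T‖ ≤ 1 ∧
      (⨆ T ∈ Metric.closedBall (0 : H2 →L[ℂ] H2) 1,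
        ‖μ ((Q i).comp (T.comp (Q i)))‖) ≤ ‖μ ((Q i).comp (T.comp (Q i)))‖ + ε' := by
    intro i
    set F : ℝ := ⨆ T ∈ Metric.closedBall (0 : H2 →L[ℂ] H2) 1,
        ‖μ ((Q i).comp (T.comp (Q i)))‖ with hFdef
    have h1 : F - ε' < F := by linarith
    obtain ⟨T, hT⟩ := exists_lt_of_lt_ciSup h1
    by_cases hb : T ∈ Metric.closedBall (0 : H2 →L[ℂ] H2) 1
    · rw [ciSup_pos hb] at hT
      exact ⟨T, mem_closedBall_zero_iff.1 hb, by linarith⟩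
    · haveI : IsEmpty (T ∈ Metric.closedBall (0 : H2 →L[ℂ] H2) 1) := ⟨hb⟩
      rw [Real.iSup_of_isEmpty] at hT
      refine ⟨0, norm_zero.le.trans zero_le_one, ?_⟩
      have h0 : (Q i).comp ((0 : H2 →L[ℂ] H2).comp (Q i)) = 0 := by
        ext x; simp
      rw [h0, map_zero, norm_zero]
      linarith
  choose T hT1 hT2 using hchoice
  set z : Fin n → ℂ := fun i => μ ((Q i).comp ((T i).comp (Q i))) with hz
  set c : Fin n → ℂ := fun i => if z i = 0 then 1 else (‖z i‖ : ℂ) / z i with hc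
  have hc1 : ∀ i, ‖c i‖ = 1 := by
    intro i
    rw [hc]
    by_cases h : z i = 0
    · simp [h]
    · simp only [h, if_false]
      rw [norm_div, Complex.norm_real, Real.norm_of_nonneg (norm_nonneg _),
        div_self (norm_ne_zero_iff.2 h)]
  have hcz : ∀ i, c i * z i = (‖z i‖ : ℂ) := by
    intro i
    rw [hc]
    by_cases h : z i = 0
    · simp [h]
    · simp only [h, if_false]
      exact div_mul_cancel₀ _ h
  set S : H2 →L[ℂ] H2 := ∑ i, c i • ((Q i).comp ((T i).comp (Q i))) with hS
  have hμS : μ S = ((∑ i, ‖z i‖ : ℝ) : ℂ) := by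
    rw [hS, map_sum]
    push_cast
    refine Finset.sum_congr rfl fun i _ => ?_
    rw [map_smul, smul_eq_mul, hz]
    exact hcz i
  have hSnorm : ‖S‖ ≤ 1 := by
    refine ContinuousLinearMap.opNorm_le_bound _ zero_le_one fun x => ?_
    rw [one_mul]
    set v : Fin n → H2 := fun i => c i • (Q i) ((T i) ((Q i) x)) with hv
    have hSx : S x = ∑ i, v i := by
      rw [hS, ContinuousLinearMap.sum_apply]
      exact Finset.sum_congr rfl fun i _ => rfl
    have hvsupp : ∀ (i : Fin n) (k : ℕ+), k ∉ M' i → (v i : ∀ _ : ℕ+, ℂ) k = 0 := by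
      intro i k hk
      rw [hv]
      simp only [lp.coeFn_smul, Pi.smul_apply]
      rw [hQsupp i _ k hk, smul_zero]
    have horth : ∀ i ∈ Finset.univ, ∀ j ∈ (Finset.univ : Finset (Fin n)), i ≠ j →
        (inner ℂ (v i) (v j) : ℂ) = 0 := by
      intro i _ j _ hij
      refine inner_eq_zero_of_disjoint_support _ _ fun k => ?_
      by_cases hki : k ∈ M' i
      · exact Or.inr (hvsupp j k (hdisjoint i j hij k hki))
      · exact Or.inl (hvsupp i k hki)
    have hpyth : ‖S x‖ ^ 2 = ∑ i, ‖v i‖ ^ 2 := by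
      rw [hSx]; exact norm_sum_sq_of_orthogonal _ _ horth
    have hvi : ∀ i, ‖v i‖ ≤ ‖(Q i) x‖ := by
      intro i
      rw [hv]
      simp only
      rw [norm_smul, hc1 i, one_mul]
      calc ‖(Q i) ((T i) ((Q i) x))‖ ≤ ‖(T i) ((Q i) x)‖ := maskL_norm_apply_le _ _
        _ ≤ ‖T i‖ * ‖(Q i) x‖ := (T i).le_opNorm _
        _ ≤ 1 * ‖(Q i) x‖ := by gcongr; exact hT1 i
        _ = ‖(Q i) x‖ := one_mul _
    have hQx : ∑ i, ‖(Q i) x‖ ^ 2 ≤ ‖x‖ ^ 2 := by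
      set w : H2 := ∑ i, (Q i) x with hw
      have horth2 : ∀ i ∈ Finset.univ, ∀ j ∈ (Finset.univ : Finset (Fin n)), i ≠ j →
          (inner ℂ ((Q i) x) ((Q j) x) : ℂ) = 0 := by
        intro i _ j _ hij
        refine inner_eq_zero_of_disjoint_support _ _ fun k => ?_
        by_cases hki : k ∈ M' i
        · exact Or.inr (hQsupp j x k (hdisjoint i j hij k hki))
        · exact Or.inl (hQsupp i x k hki)
      have hwnorm : ‖w‖ ^ 2 = ∑ i, ‖(Q i) x‖ ^ 2 := by
        rw [hw]; exact norm_sum_sq_of_orthogonal _ _ horth2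
      have hinner : (inner ℂ w x : ℂ) = ((∑ i, ‖(Q i) x‖ ^ 2 : ℝ) : ℂ) := by
        rw [hw, sum_inner]
        push_cast
        refine Finset.sum_congr rfl fun i _ => ?_
        have hsplit : (inner ℂ ((Q i) x) x : ℂ) =
            inner ℂ ((Q i) x) ((Q i) x) + inner ℂ ((Q i) x) (x - (Q i) x) := by
          rw [← inner_add_right, add_sub_cancel]
        have hz2 : (inner ℂ ((Q i) x) (x - (Q i) x) : ℂ) = 0 := by
          refine inner_eq_zero_of_disjoint_support _ _ fun k => ?_
          by_cases hk : k ∈ M' i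
          · refine Or.inr ?_
            have : ((Q i) x : ∀ _ : ℕ+, ℂ) k = (x : ∀ _ : ℕ+, ℂ) k := by
              simp [hQ, Set.indicator_of_mem hk]
            simp [lp.coeFn_sub, this]
          · exact Or.inl (hQsupp i x k hk)
        rw [hsplit, hz2, add_zero, inner_self_eq_norm_sq_to_K]
        norm_cast
      have hre : (∑ i, ‖(Q i) x‖ ^ 2) ≤ ‖w‖ * ‖x‖ := by
        have h1 : (inner ℂ w x : ℂ).re = ∑ i, ‖(Q i) x‖ ^ 2 := by
          rw [hinner, Complex.ofReal_re]
        calc (∑ i, ‖(Q i) x‖ ^ 2) = (inner ℂ w x : ℂ).re := h1.symm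
          _ ≤ ‖(inner ℂ w x : ℂ)‖ := by
              exact Complex.re_le_norm _
          _ ≤ ‖w‖ * ‖x‖ := norm_inner_le_norm _ _
      nlinarith [norm_nonneg w, norm_nonneg x]
    have hfin2 : ‖S x‖ ^ 2 ≤ ‖x‖ ^ 2 := by
      rw [hpyth]
      calc (∑ i, ‖v i‖ ^ 2) ≤ ∑ i, ‖(Q i) x‖ ^ 2 :=
            Finset.sum_le_sum fun i _ => pow_le_pow_left₀ (norm_nonneg _) (hvi i) 2
        _ ≤ ‖x‖ ^ 2 := hQx
    nlinarith [norm_nonneg (S x), norm_nonneg x]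
  have hsum : (∑ i, ‖z i‖) ≤ ‖μ‖ := by
    have h1 : ‖μ S‖ = ∑ i, ‖z i‖ := by
      rw [hμS, Complex.norm_real, Real.norm_of_nonneg
        (Finset.sum_nonneg fun i _ => norm_nonneg _)]
    calc (∑ i, ‖z i‖) = ‖μ S‖ := h1.symm
      _ ≤ ‖μ‖ * ‖S‖ := μ.le_opNorm S
      _ ≤ ‖μ‖ * 1 := by gcongr
      _ = ‖μ‖ := mul_one _
  have hnε : (n : ℝ) * ε' ≤ ε := by
    rw [hε'def, ← mul_div_assoc, div_le_iff₀ (by positivity : (0:ℝ) < (n:ℝ)+1)]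
    nlinarith [hε.le, Nat.cast_nonneg (α := ℝ) n]
  calc (∑ i : Fin n, (⨆ T ∈ Metric.closedBall (0 : H2 →L[ℂ] H2) 1,
        ‖μ ((Q i).comp (T.comp (Q i)))‖))
      ≤ ∑ i, (‖z i‖ + ε') := Finset.sum_le_sum fun i _ => hT2 i
    _ = (∑ i, ‖z i‖) + n * ε' := by
        rw [Finset.sum_add_distrib, Finset.sum_const, Finset.card_univ,
          Fintype.card_fin, nsmul_eq_mul]
    _ ≤ ‖μ‖ + n * ε' := by linarith
    _ ≤ ‖μ‖ + ε := by linarith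
end
end

section
/- Let X be a closed linear subspace of a complex Banach space Y, let X̃ be a complex Banach space, and let T : X → X̃ be a bounded linear bijection with ‖T‖ = 1. Then there exist a complex Banach space Ỹ, a linear isometric embedding j : X̃ → Ỹ, and a bounded linear bijection T̃ : Y → Ỹ such that T̃x = j(Tx) for all x ∈ X, ‖T̃‖ = 1, and ‖T̃‖·‖T̃⁻¹‖ ≤ 2‖T⁻¹‖ + 1. -/
universe u

set_option linter.unusedSectionVars false in
lemma withLp_one_norm {Y : Type u} [NormedAddCommGroup Y] {Xt : Type u} [NormedAddCommGroup Xt]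
    (p : WithLp 1 (Y × Xt)) : ‖p‖ = ‖p.fst‖ + ‖p.snd‖ := by
  rw [WithLp.prod_norm_eq_add (by simp)]
  simp

/-- Let `X` be a closed subspace of a complex Banach space `Y` and `T : X → X̃` a
bounded linear bijection onto a complex Banach space `X̃` with `‖T‖ = 1` (its inverse
`Tinv` is bounded).  Then there are a complex Banach space `Ỹ`, a linear isometric
embedding `j : X̃ → Ỹ`, and a bounded linear bijection `T̃ : Y → Ỹ` extending `j ∘ T`
with `‖T̃‖ = 1` and `‖T̃‖·‖T̃⁻¹‖ ≤ 2‖T⁻¹‖ + 1`. -/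
theorem stmt14 {Y : Type u} [NormedAddCommGroup Y] [NormedSpace ℂ Y] [CompleteSpace Y]
    {Xt : Type u} [NormedAddCommGroup Xt] [NormedSpace ℂ Xt] [CompleteSpace Xt]
    (X : Subspace ℂ Y) (hX : IsClosed (X : Set Y))
    (T : X →L[ℂ] Xt) (hT : ‖T‖ = 1)
    (Tinv : Xt →L[ℂ] X) (hTl : ∀ x : X, Tinv (T x) = x) (hTr : ∀ x' : Xt, T (Tinv x') = x') :
    ∃ (Yt : Type u) (gYt : NormedAddCommGroup Yt)
      (sYt : @NormedSpace ℂ Yt _ gYt.toSeminormedAddCommGroup),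
      letI := gYt
      letI := sYt
      CompleteSpace Yt ∧
      ∃ (j : Xt →ₗᵢ[ℂ] Yt) (Tt : Y →L[ℂ] Yt) (Ttinv : Yt →L[ℂ] Y),
        (∀ y : Y, Ttinv (Tt y) = y) ∧
        (∀ yt : Yt, Tt (Ttinv yt) = yt) ∧
        (∀ x : X, Tt (x : Y) = j (T x)) ∧
        ‖Tt‖ = 1 ∧
        ‖Tt‖ * ‖Ttinv‖ ≤ 2 * ‖Tinv‖ + 1 := by
  classical
  set E := WithLp 1 (Y × Xt) with hE
  let eqv : E ≃L[ℂ] Y × Xt := WithLp.prodContinuousLinearEquiv 1 ℂ Y Xt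
  -- g (y, x̃) = y + Tinv x̃
  let g : E →L[ℂ] Y :=
    (ContinuousLinearMap.fst ℂ Y Xt
      + (X.subtypeL.comp Tinv).comp (ContinuousLinearMap.snd ℂ Y Xt)).comp
      (eqv : E →L[ℂ] Y × Xt)
  have hg_apply : ∀ p : E, g p = p.fst + (Tinv p.snd : Y) := fun p => rfl
  let W : Submodule ℂ E := LinearMap.ker (g : E →ₗ[ℂ] Y)
  haveI hWc : IsClosed (W : Set E) := ContinuousLinearMap.isClosed_ker g
  have hWmem : ∀ p : E, p ∈ W ↔ g p = 0 := fun p => LinearMap.mem_ker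
  -- embeddings of Y and Xt into E
  let ι1 : Y →L[ℂ] E := (eqv.symm : Y × Xt →L[ℂ] E).comp (ContinuousLinearMap.inl ℂ Y Xt)
  let ι2 : Xt →L[ℂ] E := (eqv.symm : Y × Xt →L[ℂ] E).comp (ContinuousLinearMap.inr ℂ Y Xt)
  have hι1 : ∀ y : Y, ((ι1 y).fst = y ∧ (ι1 y).snd = 0) := fun y => ⟨rfl, rfl⟩
  have hι2 : ∀ x : Xt, ((ι2 x).fst = 0 ∧ (ι2 x).snd = x) := fun x => ⟨rfl, rfl⟩
  have hgι1 : ∀ y : Y, g (ι1 y) = y := by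
    intro y; rw [hg_apply, (hι1 y).1, (hι1 y).2, map_zero]
    simp
  have hgι2 : ∀ x : Xt, g (ι2 x) = (Tinv x : Y) := by
    intro x; rw [hg_apply, (hι2 x).1, (hι2 x).2, zero_add]
  refine ⟨E ⧸ W, inferInstance, inferInstance, inferInstance, ?_⟩
  have hTle : ∀ x : X, ‖T x‖ ≤ ‖(x : Y)‖ := by
    intro x
    calc ‖T x‖ ≤ ‖T‖ * ‖x‖ := T.le_opNorm x
    _ = ‖(x : Y)‖ := by rw [hT, one_mul]; rfl
  -- the key isometry computation
  have hjnorm : ∀ x : Xt, ‖(Submodule.Quotient.mk (ι2 x) : E ⧸ W)‖ = ‖x‖ := by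
    intro x
    refine le_antisymm ((Submodule.Quotient.norm_mk_le W _).trans ?_) ?_
    · rw [withLp_one_norm, (hι2 x).1, (hι2 x).2, norm_zero, zero_add]
    · refine le_of_forall_pos_le_add ?_
      intro ε hε
      obtain ⟨m, hm, hmlt⟩ := Submodule.Quotient.norm_mk_lt
        (Submodule.Quotient.mk (ι2 x) : E ⧸ W) hε
      have hmem : m - ι2 x ∈ W := by
        rw [← Submodule.Quotient.eq W]; exact hm
      have hgm : g m = g (ι2 x) := by
        have h0 := (hWmem _).mp hmem
        rw [map_sub] at h0
        exact sub_eq_zero.mp h0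
      have h1 : m.fst = ((Tinv (x - m.snd) : X) : Y) := by
        have h2 : m.fst + (Tinv m.snd : Y) = (Tinv x : Y) := by
          rw [← hg_apply, hgm, hgι2]
        rw [map_sub]
        push_cast
        exact eq_sub_of_add_eq h2
      have h2 : ‖x - m.snd‖ ≤ ‖m.fst‖ := by
        calc ‖x - m.snd‖ = ‖T (Tinv (x - m.snd))‖ := by rw [hTr]
        _ ≤ ‖((Tinv (x - m.snd) : X) : Y)‖ := hTle _
        _ = ‖m.fst‖ := by rw [h1]
      have h3 : ‖x‖ ≤ ‖x - m.snd‖ + ‖m.snd‖ := by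
        simpa using norm_add_le (x - m.snd) m.snd
      have h4 : ‖m‖ = ‖m.fst‖ + ‖m.snd‖ := withLp_one_norm m
      linarith
  let jlin : Xt →ₗ[ℂ] E ⧸ W := W.mkQ.comp (ι2 : Xt →L[ℂ] E).toLinearMap
  have hjlin : ∀ x : Xt, jlin x = Submodule.Quotient.mk (ι2 x) := fun x => rfl
  let j : Xt →ₗᵢ[ℂ] E ⧸ W := ⟨jlin, fun x => hjnorm x⟩
  -- Tt
  let Ttlin : Y →ₗ[ℂ] E ⧸ W := W.mkQ.comp (ι1 : Y →L[ℂ] E).toLinearMap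
  have hTtlin : ∀ y : Y, Ttlin y = Submodule.Quotient.mk (ι1 y) := fun y => rfl
  have hTtbound : ∀ y : Y, ‖Ttlin y‖ ≤ 1 * ‖y‖ := by
    intro y
    rw [one_mul, hTtlin]
    refine (Submodule.Quotient.norm_mk_le W _).trans ?_
    rw [withLp_one_norm, (hι1 y).1, (hι1 y).2, norm_zero, add_zero]
  let Tt : Y →L[ℂ] E ⧸ W := Ttlin.mkContinuous 1 hTtbound
  have hTt : ∀ y : Y, Tt y = Submodule.Quotient.mk (ι1 y) := fun y => rfl
  -- Ttinv
  have hker : W ≤ LinearMap.ker (g : E →ₗ[ℂ] Y) := fun p hp => (hWmem p).mp hp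
  let Tl : E ⧸ W →ₗ[ℂ] Y := W.liftQ (g : E →ₗ[ℂ] Y) hker
  have hTlmk : ∀ m : E, Tl (Submodule.Quotient.mk m) = g m := fun m => rfl
  have hTlbound : ∀ q : E ⧸ W, ‖Tl q‖ ≤ (‖Tinv‖ + 1) * ‖q‖ := by
    intro q
    have hC : (0:ℝ) < ‖Tinv‖ + 1 := by positivity
    refine le_of_forall_pos_le_add ?_
    intro ε hε
    obtain ⟨m, rfl, hmlt⟩ := Submodule.Quotient.norm_mk_lt q (div_pos hε hC)
    have h1 : ‖g m‖ ≤ ‖m.fst‖ + ‖Tinv‖ * ‖m.snd‖ := by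
      rw [hg_apply]
      refine (norm_add_le _ _).trans ?_
      have : ‖((Tinv m.snd : X) : Y)‖ = ‖Tinv m.snd‖ := rfl
      rw [this]
      exact add_le_add_right (Tinv.le_opNorm m.snd) _
    have h4 : ‖m‖ = ‖m.fst‖ + ‖m.snd‖ := withLp_one_norm m
    have h5 : ‖m.fst‖ + ‖Tinv‖ * ‖m.snd‖ ≤ (‖Tinv‖ + 1) * ‖m‖ := by
      rw [h4]
      nlinarith [norm_nonneg m.fst, norm_nonneg m.snd, norm_nonneg Tinv]
    have h6 : (‖Tinv‖ + 1) * ‖m‖ ≤ (‖Tinv‖ + 1) * (‖(Submodule.Quotient.mk m : E ⧸ W)‖ + ε / (‖Tinv‖ + 1)) :=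
      mul_le_mul_of_nonneg_left hmlt.le hC.le
    have h7 : (‖Tinv‖ + 1) * (‖(Submodule.Quotient.mk m : E ⧸ W)‖ + ε / (‖Tinv‖ + 1))
        = (‖Tinv‖ + 1) * ‖(Submodule.Quotient.mk m : E ⧸ W)‖ + ε := by
      field_simp
    rw [hTlmk]
    linarith
  let Ttinv : E ⧸ W →L[ℂ] Y := Tl.mkContinuous (‖Tinv‖ + 1) hTlbound
  have hTtinv : ∀ q : E ⧸ W, Ttinv q = Tl q := fun q => rfl
  -- the identities
  have key3 : ∀ x : X, Tt (x : Y) = j (T x) := by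
    intro x
    rw [hTt]
    show _ = Submodule.Quotient.mk (ι2 (T x))
    rw [Submodule.Quotient.eq W, hWmem, map_sub, hgι1, hgι2, hTl, sub_self]
  have key1 : ∀ y : Y, Ttinv (Tt y) = y := by
    intro y
    rw [hTt, hTtinv, hTlmk, hgι1]
  have key2 : ∀ yt : E ⧸ W, Tt (Ttinv yt) = yt := by
    intro yt
    obtain ⟨m, rfl⟩ := Submodule.Quotient.mk_surjective W yt
    rw [hTtinv, hTlmk, hTt, Submodule.Quotient.eq W, hWmem, map_sub, hgι1]
    exact sub_self _
  have hTtnorm : ‖Tt‖ = 1 := by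
    refine le_antisymm (Ttlin.mkContinuous_norm_le zero_le_one hTtbound) ?_
    rw [← hT]
    refine T.opNorm_le_bound (norm_nonneg Tt) fun x => ?_
    calc ‖T x‖ = ‖j (T x)‖ := (j.norm_map _).symm
    _ = ‖Tt (x : Y)‖ := by rw [key3]
    _ ≤ ‖Tt‖ * ‖(x : Y)‖ := Tt.le_opNorm _
    _ = ‖Tt‖ * ‖x‖ := rfl
  refine ⟨j, Tt, Ttinv, key1, key2, key3, hTtnorm, ?_⟩
  rw [hTtnorm, one_mul]
  have := Tl.mkContinuous_norm_le (by positivity) hTlbound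
  linarith [norm_nonneg Tinv]
end
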